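/- Let P_b, U_b ∈ C^{n_b×n_{b+1}} be [Δ_b]-stable on Δ_{b+1} for b = 1,…,t with P_b^{-+} = U_b^{-+} for each b. If additionally Δ₁ = (⟨n₁⟩) and Δ_{t+1} = ({j}, K^c)_{j∈K} for a nonempty K ⊆ ⟨n_{t+1}⟩, then (P₁P₂⋯P_t)^K = (U₁U₂⋯U_t)^K, i.e., the two products agree on all columns indexed by K. -/

import Mathlib

/-- Product `M 0 * M 1 * ⋯ * M (t-1)` of a chain of composable complex matrices. -/
noncomputable def chainProd : ∀ (t : ℕ) (τ : Fin (t + 1) → Type) [∀ i, Fintype (τ i)]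
    [∀ i, DecidableEq (τ i)]
    (_ : ∀ b : Fin t, Matrix (τ b.castSucc) (τ b.succ) ℂ),
    Matrix (τ 0) (τ (Fin.last t)) ℂ
  | 0, τ, _, _, _ => (1 : Matrix (τ 0) (τ 0) ℂ)
  | (t + 1), τ, _, _, M =>
      M 0 * chainProd t (fun i => τ i.succ) (fun b => M b.succ)

/-- `P` is `[Δ]`-stable on `Sg`. -/
def IsStableOn {m n : ℕ} (P : Matrix (Fin m) (Fin n) ℂ)
    (Δ : Finpartition (Finset.univ : Finset (Fin m)))
    (Sg : Finpartition (Finset.univ : Finset (Fin n))) : Prop :=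
  ∀ K ∈ Δ.parts, ∀ L ∈ Sg.parts, ∀ i ∈ K, ∀ i' ∈ K,
    ∑ j ∈ L, P i j = ∑ j ∈ L, P i' j

lemma my_sum_parts {α : Type*} [Fintype α] [DecidableEq α]
    (Δ : Finpartition (Finset.univ : Finset α)) (g : α → ℂ) :
    ∑ k : α, g k = ∑ K ∈ Δ.parts, ∑ k ∈ K, g k := by
  conv_lhs => rw [← Δ.biUnion_parts]
  exact Finset.sum_biUnion Δ.disjoint

lemma my_grouped_eq {α : Type*} [Fintype α] [DecidableEq α]
    (Δ : Finpartition (Finset.univ : Finset α)) (a b s : α → ℂ)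
    (hs : ∀ K ∈ Δ.parts, ∀ k ∈ K, ∀ k' ∈ K, s k = s k')
    (hab : ∀ K ∈ Δ.parts, ∑ k ∈ K, a k = ∑ k ∈ K, b k) :
    ∑ k : α, a k * s k = ∑ k : α, b k * s k := by
  rw [my_sum_parts Δ, my_sum_parts Δ]
  refine Finset.sum_congr rfl fun K hK => ?_
  obtain ⟨k₀, hk₀⟩ := Δ.nonempty_of_mem_parts hK
  have h1 : ∀ k ∈ K, a k * s k = a k * s k₀ := fun k hk => by rw [hs K hK k hk k₀ hk₀]
  have h2 : ∀ k ∈ K, b k * s k = b k * s k₀ := fun k hk => by rw [hs K hK k hk k₀ hk₀]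
  rw [Finset.sum_congr rfl h1, Finset.sum_congr rfl h2, ← Finset.sum_mul, ← Finset.sum_mul,
    hab K hK]

lemma my_sum_mul {α β γ : Type*} [Fintype β] (A : Matrix α β ℂ) (R : Matrix β γ ℂ)
    (i : α) (L : Finset γ) :
    ∑ j ∈ L, (A * R) i j = ∑ k : β, A i k * ∑ j ∈ L, R k j := by
  simp only [Matrix.mul_apply, Finset.mul_sum]
  exact Finset.sum_comm

/-- General-type version of `IsStableOn`. -/
def StableOn' {α β : Type*} [Fintype α] [Fintype β] [DecidableEq α] [DecidableEq β]
    (P : Matrix α β ℂ) (Δ : Finpartition (Finset.univ : Finset α))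
    (Sg : Finpartition (Finset.univ : Finset β)) : Prop :=
  ∀ K ∈ Δ.parts, ∀ L ∈ Sg.parts, ∀ i ∈ K, ∀ i' ∈ K,
    ∑ j ∈ L, P i j = ∑ j ∈ L, P i' j

theorem chainProd_stable : ∀ (t : ℕ) (τ : Fin (t + 1) → Type) [∀ i, Fintype (τ i)]
    [∀ i, DecidableEq (τ i)]
    (Δ : ∀ i, Finpartition (Finset.univ : Finset (τ i)))
    (M : ∀ b : Fin t, Matrix (τ b.castSucc) (τ b.succ) ℂ),
    (∀ b : Fin t, StableOn' (M b) (Δ b.castSucc) (Δ b.succ)) →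
    StableOn' (chainProd t τ M) (Δ 0) (Δ (Fin.last t)) := by
  intro t
  induction t with
  | zero =>
    intro τ _ _ Δ M _ K hK L hL i hi i' hi'
    have hL0 : L ∈ (Δ 0).parts := hL
    show ∑ j ∈ L, (1 : Matrix (τ 0) (τ 0) ℂ) i j = ∑ j ∈ L, (1 : Matrix (τ 0) (τ 0) ℂ) i' j
    simp only [Matrix.one_apply]
    by_cases h : K = L
    · subst h; simp [Finset.sum_ite_eq', hi, hi']
    · have hiL : i ∉ L := fun c => h ((Δ 0).eq_of_mem_parts hK hL0 hi c)
      have hiL' : i' ∉ L := fun c => h ((Δ 0).eq_of_mem_parts hK hL0 hi' c)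
      simp [Finset.sum_ite_eq', hiL, hiL']
  | succ t ih =>
    intro τ _ _ Δ M hM K hK L hL i hi i' hi'
    have hRst : StableOn' (chainProd t (fun i => τ i.succ) (fun b => M b.succ))
        (Δ (0 : Fin (t + 1)).succ) (Δ (Fin.last t).succ) :=
      ih (fun i => τ i.succ) (fun i => Δ i.succ) (fun b => M b.succ) fun b => hM b.succ
    show ∑ j ∈ L, (M 0 * chainProd t (fun i => τ i.succ) (fun b => M b.succ)) i j =
      ∑ j ∈ L, (M 0 * chainProd t (fun i => τ i.succ) (fun b => M b.succ)) i' j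
    refine (my_sum_mul _ _ i L).trans (Eq.trans ?_ (my_sum_mul _ _ i' L).symm)
    refine my_grouped_eq (Δ (0 : Fin (t + 1)).succ) _ _ _ ?_ ?_
    · intro K₁ hK₁ k hk k' hk'
      exact hRst K₁ hK₁ L hL k hk k' hk'
    · intro K₁ hK₁
      exact hM 0 K hK K₁ hK₁ i hi i' hi'

theorem chainProd_sim : ∀ (t : ℕ) (τ : Fin (t + 1) → Type) [∀ i, Fintype (τ i)]
    [∀ i, DecidableEq (τ i)]
    (Δ : ∀ i, Finpartition (Finset.univ : Finset (τ i)))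
    (P U : ∀ b : Fin t, Matrix (τ b.castSucc) (τ b.succ) ℂ),
    (∀ b : Fin t, StableOn' (U b) (Δ b.castSucc) (Δ b.succ)) →
    (∀ b : Fin t, ∀ K ∈ (Δ b.castSucc).parts, ∀ L ∈ (Δ b.succ).parts, ∀ i ∈ K,
      ∑ j ∈ L, P b i j = ∑ j ∈ L, U b i j) →
    ∀ K ∈ (Δ 0).parts, ∀ L ∈ (Δ (Fin.last t)).parts, ∀ i ∈ K,
      ∑ j ∈ L, chainProd t τ P i j = ∑ j ∈ L, chainProd t τ U i j := by
  intro t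
  induction t with
  | zero => intro τ _ _ Δ P U _ _ K hK L hL i hi; rfl
  | succ t ih =>
    intro τ _ _ Δ P U hU hsim K hK L hL i hi
    set τ' := fun i : Fin (t + 1) => τ i.succ with hτ'
    set Δ' := fun i : Fin (t + 1) => Δ i.succ with hΔ'
    have hU' : ∀ b : Fin t, StableOn' (U b.succ) (Δ' b.castSucc) (Δ' b.succ) :=
      fun b => hU b.succ
    have hRUst : StableOn' (chainProd t τ' (fun b => U b.succ)) (Δ' 0) (Δ' (Fin.last t)) :=
      chainProd_stable t τ' Δ' (fun b => U b.succ) hU'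
    have hL' : L ∈ (Δ' (Fin.last t)).parts := hL
    have hsim' : ∀ b : Fin t, ∀ K ∈ (Δ' b.castSucc).parts, ∀ L ∈ (Δ' b.succ).parts, ∀ i ∈ K,
        ∑ j ∈ L, P b.succ i j = ∑ j ∈ L, U b.succ i j := fun b => hsim b.succ
    have hIH := ih τ' Δ' (fun b => P b.succ) (fun b => U b.succ) hU' hsim'
    show ∑ j ∈ L, (P 0 * chainProd t τ' (fun b => P b.succ)) i j =
      ∑ j ∈ L, (U 0 * chainProd t τ' (fun b => U b.succ)) i j
    refine (my_sum_mul _ _ i L).trans (Eq.trans ?_ (my_sum_mul _ _ i L).symm)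
    have hptu : ∀ k : τ' 0, ∑ j ∈ L, chainProd t τ' (fun b => P b.succ) k j =
        ∑ j ∈ L, chainProd t τ' (fun b => U b.succ) k j := fun k =>
      hIH ((Δ' 0).part k) ((Δ' 0).part_mem.2 (Finset.mem_univ k)) L hL' k
        ((Δ' 0).mem_part (Finset.mem_univ k))
    calc ∑ k, P 0 i k * ∑ j ∈ L, chainProd t τ' (fun b => P b.succ) k j
        = ∑ k, P 0 i k * ∑ j ∈ L, chainProd t τ' (fun b => U b.succ) k j :=
          Finset.sum_congr rfl fun k _ => by rw [hptu k]
      _ = ∑ k, U 0 i k * ∑ j ∈ L, chainProd t τ' (fun b => U b.succ) k j := by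
          refine my_grouped_eq (Δ' 0) _ _ _ ?_ ?_
          · intro K₁ hK₁ k hk k' hk'
            exact hRUst K₁ hK₁ L hL' k hk k' hk'
          · intro K₁ hK₁
            exact hsim 0 K hK K₁ hK₁ i hi

/-- with `P b ∼ U b` for each `b`, `Δ₁ = (⟨n₁⟩)` trivial and
`Δ_{t+1} = ({j},Kᶜ)_{j∈K}` for a nonempty `K`, the products agree on the columns
indexed by `K`: `(P₁⋯P_t)^K = (U₁⋯U_t)^K`. -/
theorem chainProd_similar_columns (t : ℕ) (ht : 1 ≤ t)
    (n : Fin (t + 1) → ℕ)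
    (Δ : ∀ i : Fin (t + 1), Finpartition (Finset.univ : Finset (Fin (n i))))
    (P U : ∀ b : Fin t, Matrix (Fin (n b.castSucc)) (Fin (n b.succ)) ℂ)
    (hP : ∀ b : Fin t, IsStableOn (P b) (Δ b.castSucc) (Δ b.succ))
    (hU : ∀ b : Fin t, IsStableOn (U b) (Δ b.castSucc) (Δ b.succ))
    (hsim : ∀ b : Fin t, ∀ K ∈ (Δ b.castSucc).parts, ∀ L ∈ (Δ b.succ).parts, ∀ i ∈ K,
      ∑ j ∈ L, P b i j = ∑ j ∈ L, U b i j)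
    (hΔ₁ : (Δ 0).parts = {Finset.univ})
    (K : Finset (Fin (n (Fin.last t)))) (hK : K.Nonempty)
    (hΔlast : (Δ (Fin.last t)).parts =
      (K.image fun j => ({j} : Finset (Fin (n (Fin.last t))))) ∪
        (if Kᶜ = ∅ then ∅ else {Kᶜ})) :
    ∀ j ∈ K, ∀ i : Fin (n 0),
      chainProd t (fun i => Fin (n i)) P i j =
      chainProd t (fun i => Fin (n i)) U i j := by
  intro j hj i
  have huniv : (Finset.univ : Finset (Fin (n 0))) ∈ (Δ 0).parts := by
    rw [hΔ₁]; exact Finset.mem_singleton_self _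
  have hsingleton : ({j} : Finset (Fin (n (Fin.last t)))) ∈ (Δ (Fin.last t)).parts := by
    rw [hΔlast]
    exact Finset.mem_union_left _ (Finset.mem_image.2 ⟨j, hj, rfl⟩)
  have := chainProd_sim t (fun i => Fin (n i)) Δ P U (fun b => hU b) hsim
    Finset.univ huniv {j} hsingleton i (Finset.mem_univ i)
  simpa using this
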